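/- Let X = {x_1,...,x_n} be a finite ordered set, F a family of subsets of X, and for 1 ≤ i ≤ n let F_{≤i} = { S ∩ {x_1,...,x_j} : S ∈ F, 1 ≤ j ≤ i }. Suppose weights w(x_1),...,w(x_i) have been assigned so that all sets in F_{≤i} have distinct total weights. If w(x_{i+1}) is any positive integer that is neither the weight of any set in F_{≤i} nor the absolute difference of weights of any two distinct sets in F_{≤i}, then all sets in F_{≤i+1} have distinct total weights. -/
import Mathlib


/-- The family `F_{≤i}` of projections `S ∩ {x_1,...,x_j}` for `S ∈ F` and `j ≤ i`. -/
def projFamilyUpTo {n : ℕ} (F : Finset (Finset (Fin n))) (i : Fin n) :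
    Finset (Finset (Fin n)) :=
  F.biUnion fun S => (Finset.Iic i).image fun k => S.filter (· ≤ k)

/-- Inductive step of the Deterministic Separation Lemma: if all sets of
`F_{≤i}` have distinct weights and `w(x_{i+1})` is a positive integer which is
neither the weight of a set in `F_{≤i}` nor the absolute difference of the
weights of two distinct sets in `F_{≤i}`, then all sets in `F_{≤i+1}` have
distinct weights. -/
lemma decomp {n : ℕ} (F : Finset (Finset (Fin n))) (i j : Fin n)
    (hij : (j : ℕ) = (i : ℕ) + 1) {A : Finset (Fin n)}
    (hA : A ∈ projFamilyUpTo F j) :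
    (A ∈ projFamilyUpTo F i ∧ j ∉ A) ∨
    (∃ A' ∈ projFamilyUpTo F i, j ∉ A' ∧ A = insert j A') := by
  simp only [projFamilyUpTo, Finset.mem_biUnion, Finset.mem_image, Finset.mem_Iic] at hA ⊢
  obtain ⟨S, hS, k, hk, rfl⟩ := hA
  rw [Fin.le_def] at hk
  have hji : ¬ (j ≤ i) := by rw [Fin.le_def]; omega
  rcases Nat.lt_or_ge (k : ℕ) (j : ℕ) with hki | hkj
  · left
    constructor
    · exact ⟨S, hS, k, by rw [Fin.le_def]; omega, rfl⟩
    · simp only [Finset.mem_filter]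
      rintro ⟨-, hjk⟩
      rw [Fin.le_def] at hjk; omega
  · have hkeq : k = j := Fin.le_antisymm (Fin.le_def.mpr hk) (Fin.le_def.mpr hkj)
    subst hkeq
    have hfi : ∃ T ∈ F, ∃ m ≤ i, T.filter (· ≤ m) = S.filter (· ≤ i) :=
      ⟨S, hS, i, le_refl i, rfl⟩
    by_cases hjS : k ∈ S
    · right
      refine ⟨S.filter (· ≤ i), hfi, ?_, ?_⟩
      · simp only [Finset.mem_filter]
        rintro ⟨-, h⟩; exact hji h
      · ext x
        simp only [Finset.mem_insert, Finset.mem_filter, Fin.le_def]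
        constructor
        · rintro ⟨hx, hle⟩
          rcases Nat.lt_or_ge (x : ℕ) (k : ℕ) with h | h
          · exact Or.inr ⟨hx, by omega⟩
          · left; exact Fin.ext (by omega)
        · rintro (rfl | ⟨hx, hle⟩)
          · exact ⟨hjS, le_refl _⟩
          · exact ⟨hx, by omega⟩
    · left
      have : S.filter (· ≤ k) = S.filter (· ≤ i) := by
        ext x
        simp only [Finset.mem_filter, Fin.le_def]
        constructor
        · rintro ⟨hx, hle⟩
          refine ⟨hx, ?_⟩
          rcases Nat.lt_or_ge (x : ℕ) (k : ℕ) with h | h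
          · omega
          · exact absurd (Fin.ext (by omega) : x = k) (fun h => hjS (h ▸ hx))
        · rintro ⟨hx, hle⟩; exact ⟨hx, by omega⟩
      rw [this]
      exact ⟨hfi, by simp [hjS]⟩

theorem separation_inductive_step {n : ℕ} (F : Finset (Finset (Fin n)))
    (w : Fin n → ℕ) (hw : ∀ x, 0 < w x) (i j : Fin n) (hij : (j : ℕ) = (i : ℕ) + 1)
    (hdist : ∀ A ∈ projFamilyUpTo F i, ∀ B ∈ projFamilyUpTo F i,
      A ≠ B → ∑ x ∈ A, w x ≠ ∑ x ∈ B, w x)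
    (hnotweight : ∀ A ∈ projFamilyUpTo F i, (w j : ℤ) ≠ ∑ x ∈ A, (w x : ℤ))
    (hnotdiff : ∀ A ∈ projFamilyUpTo F i, ∀ B ∈ projFamilyUpTo F i, A ≠ B →
      (w j : ℤ) ≠ |(∑ x ∈ A, (w x : ℤ)) - ∑ x ∈ B, (w x : ℤ)|) :
    ∀ A ∈ projFamilyUpTo F j, ∀ B ∈ projFamilyUpTo F j,
      A ≠ B → ∑ x ∈ A, w x ≠ ∑ x ∈ B, w x := by
  intro A hA B hB hne hsum
  have hsumZ : (∑ x ∈ A, (w x : ℤ)) = ∑ x ∈ B, (w x : ℤ) := by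
    push_cast [← Nat.cast_sum] at hsum ⊢
    exact_mod_cast hsum
  rcases decomp F i j hij hA with ⟨hA', hjA⟩ | ⟨A', hA', hjA', rfl⟩ <;>
    rcases decomp F i j hij hB with ⟨hB', hjB⟩ | ⟨B', hB', hjB', rfl⟩
  · exact hdist A hA' B hB' hne hsum
  · rw [Finset.sum_insert hjB'] at hsumZ
    by_cases hAB : A = B'
    · subst hAB
      have : (w j : ℤ) = 0 := by linarith
      have := hw j; omega
    · exact hnotdiff A hA' B' hB' hAB (by
      have hwj : (0:ℤ) < w j := by exact_mod_cast hw j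
      rw [abs_of_pos (by linarith)]; linarith)
  · rw [Finset.sum_insert hjA'] at hsumZ
    by_cases hAB : B = A'
    · subst hAB
      have : (w j : ℤ) = 0 := by linarith
      have := hw j; omega
    · exact hnotdiff B hB' A' hA' hAB (by
      have hwj : (0:ℤ) < w j := by exact_mod_cast hw j
      rw [abs_of_pos (by linarith)]; linarith)
  · rw [Finset.sum_insert hjA', Finset.sum_insert hjB'] at hsumZ
    have hAB : A' ≠ B' := fun h => hne (by rw [h])
    exact hdist A' hA' B' hB' hAB (by exact_mod_cast by linarith : ∑ x ∈ A', w x = ∑ x ∈ B', w x)
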